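/- The area of the circular segment cut off by a chord of length ℓ from a disk of radius r = 1/κ, namely A(ℓ,κ) = θr²/2 − r²·cos(θ/2)·sin(θ/2) with θ = 2 arcsin(ℓκ/2), satisfies |A(ℓ,κ) − ℓ³κ/12| ≤ C·ℓ⁵κ³ for 0 ≤ ℓκ ≤ 1 and a universal constant C. -/

import Mathlib

open Real

noncomputable def segF (x : ℝ) : ℝ := Real.arcsin x - x * Real.sqrt (1 - x^2) - 2*x^3/3

lemma segF_hasDeriv {x : ℝ} (hx0 : 0 < x) (hx1 : x < 1/2) :
    HasDerivAt segF (2*x^2*(1/Real.sqrt (1 - x^2) - 1)) x := by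
  have hx1' : x < 1 := by linarith
  have hs2 : (0:ℝ) < 1 - x^2 := by nlinarith
  have hs : 0 < Real.sqrt (1 - x^2) := Real.sqrt_pos.mpr hs2
  have hsq : Real.sqrt (1 - x^2) ^ 2 = 1 - x^2 := Real.sq_sqrt hs2.le
  have h1 : HasDerivAt Real.arcsin (1 / Real.sqrt (1 - x^2)) x :=
    Real.hasDerivAt_arcsin (by linarith) (by linarith)
  have h2 : HasDerivAt (fun y : ℝ => 1 - y^2) (-(2*x)) x := by
    have := (hasDerivAt_pow 2 x).const_sub 1
    simpa using this
  have h3 : HasDerivAt (fun y : ℝ => Real.sqrt (1 - y^2))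
      (1 / (2 * Real.sqrt (1 - x^2)) * (-(2*x))) x :=
    (Real.hasDerivAt_sqrt hs2.ne').comp x h2
  have h4 : HasDerivAt (fun y : ℝ => y * Real.sqrt (1 - y^2))
      (1 * Real.sqrt (1 - x^2) + x * (1 / (2 * Real.sqrt (1 - x^2)) * (-(2*x)))) x :=
    (hasDerivAt_id x).mul h3
  have h5 : HasDerivAt (fun y : ℝ => 2*y^3/3) (2*(3*x^2)/3) x := by
    have := ((hasDerivAt_pow 3 x).const_mul 2).div_const 3
    simpa using this
  have h := (h1.sub h4).sub h5
  refine h.congr_deriv ?_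
  have hs' : Real.sqrt (1 - x^2) ≠ 0 := hs.ne'
  have e2 : Real.sqrt (1 - x^2) = (1 - x^2) * (Real.sqrt (1 - x^2))⁻¹ := by
    rw [eq_comm, ← div_eq_mul_inv, div_eq_iff hs', ← pow_two, hsq]
  linear_combination (-1 : ℝ) * e2

lemma segF_bound {x : ℝ} (hx0 : 0 ≤ x) (hx1 : x ≤ 1/2) : |segF x - 0| ≤ x^5 := by
  have hcont : ContinuousOn segF (Set.Icc 0 (1/2)) := by
    apply ContinuousOn.sub
    apply ContinuousOn.sub
    · exact Real.continuous_arcsin.continuousOn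
    · exact (continuous_id.mul ((continuous_const.sub (continuous_pow 2)).sqrt)).continuousOn
    · exact (((continuous_pow 3).const_smul (2:ℝ)).div_const 3).continuousOn
  have hmem : x ∈ Set.Icc (0:ℝ) (1/2) := ⟨hx0, hx1⟩
  have h0mem : (0:ℝ) ∈ Set.Icc (0:ℝ) (1/2) := ⟨le_refl _, by norm_num⟩
  have hint : interior (Set.Icc (0:ℝ) (1/2)) = Set.Ioo 0 (1/2) := interior_Icc
  -- lower bound: segF monotone
  have hmono : MonotoneOn segF (Set.Icc 0 (1/2)) := by
    apply monotoneOn_of_deriv_nonneg (convex_Icc _ _) hcont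
    · rw [hint]
      intro y hy
      exact (segF_hasDeriv hy.1 hy.2).differentiableAt.differentiableWithinAt
    · rw [hint]
      intro y hy
      rw [(segF_hasDeriv hy.1 hy.2).deriv]
      have hs2 : (0:ℝ) < 1 - y^2 := by nlinarith [hy.1, hy.2]
      have hs : 0 < Real.sqrt (1 - y^2) := Real.sqrt_pos.mpr hs2
      have hsle : Real.sqrt (1 - y^2) ≤ 1 := Real.sqrt_le_one.mpr (by nlinarith [hy.1, hy.2])
      have : (1:ℝ) ≤ 1 / Real.sqrt (1 - y^2) := (one_le_div hs).mpr hsle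
      nlinarith [sq_nonneg y]
  have hF0 : segF 0 = 0 := by simp [segF]
  have hlow : 0 ≤ segF x := by
    have := hmono h0mem hmem hx0
    rwa [hF0] at this
  -- upper bound: x^5 - segF monotone
  have hmono2 : MonotoneOn (fun y => y^5 - segF y) (Set.Icc 0 (1/2)) := by
    apply monotoneOn_of_deriv_nonneg (convex_Icc _ _)
    · exact (continuous_pow 5).continuousOn.sub hcont
    · rw [hint]
      intro y hy
      exact ((hasDerivAt_pow 5 y).sub (segF_hasDeriv hy.1 hy.2)).differentiableAt.differentiableWithinAt
    · rw [hint]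
      intro y hy
      rw [show (fun y : ℝ => y^5 - segF y) = (fun y => y^5) - segF from rfl,
        ((hasDerivAt_pow 5 y).sub (segF_hasDeriv hy.1 hy.2)).deriv]
      have hs2 : (0:ℝ) < 1 - y^2 := by nlinarith [hy.1, hy.2]
      have hs : 0 < Real.sqrt (1 - y^2) := Real.sqrt_pos.mpr hs2
      have hsq : Real.sqrt (1 - y^2) ^ 2 = 1 - y^2 := Real.sq_sqrt hs2.le
      -- 1/s ≤ 1 + y^2  since (1+y^2)^2 (1-y^2) ≥ 1 on [0,1/2]
      have hkey : 1 / Real.sqrt (1 - y^2) ≤ 1 + y^2 := by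
        rw [div_le_iff₀ hs]
        have ha2 : 1 ≤ ((1+y^2) * Real.sqrt (1 - y^2))^2 := by
          have h : ((1+y^2) * Real.sqrt (1 - y^2))^2 = (1+y^2)^2 * (1-y^2) := by
            rw [mul_pow, hsq]
          rw [h]
          have hy2 : y^2 ≤ 1/4 := by nlinarith [hy.1.le, hy.2.le]
          have h4 : y^4 ≤ y^2/4 := by nlinarith [sq_nonneg y, hy2]
          have h6 : y^6 ≤ y^2/16 := by nlinarith [h4, hy2, sq_nonneg y, sq_nonneg (y^2)]
          nlinarith [h4, h6, sq_nonneg y]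
        have ha : 0 ≤ (1+y^2) * Real.sqrt (1 - y^2) := by positivity
        nlinarith [ha2, ha]
      nlinarith [mul_le_mul_of_nonneg_left hkey (show (0:ℝ) ≤ 2*y^2 by positivity),
        sq_nonneg y, pow_nonneg hy.1.le 4]
  have hhigh : segF x ≤ x^5 := by
    have := hmono2 h0mem hmem hx0
    simp only [hF0] at this
    norm_num at this
    linarith
  rw [sub_zero, abs_le]
  constructor
  · nlinarith [pow_nonneg hx0 5]
  · exact hhigh

theorem stmt_5 :
    ∃ C : ℝ, 0 < C ∧ ∀ ℓ κ : ℝ, 0 ≤ ℓ → 0 < κ → ℓ * κ ≤ 1 →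
      let r : ℝ := 1 / κ
      let θ : ℝ := 2 * Real.arcsin (ℓ * κ / 2)
      |(θ * r ^ 2 / 2 - r ^ 2 * Real.cos (θ / 2) * Real.sin (θ / 2)) - ℓ ^ 3 * κ / 12|
        ≤ C * ℓ ^ 5 * κ ^ 3 := by
  refine ⟨1, one_pos, ?_⟩
  intro ℓ κ hℓ hκ hℓκ r θ
  set x : ℝ := ℓ * κ / 2 with hxdef
  have hx0 : 0 ≤ x := by positivity
  have hx1 : x ≤ 1/2 := by simp only [hxdef]; linarith
  have hx1' : x ≤ 1 := by linarith
  have hθ2 : θ / 2 = Real.arcsin x := by simp [θ]; try ring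
  have hsin : Real.sin (θ/2) = x := by rw [hθ2, Real.sin_arcsin (by linarith) hx1']
  have hcos : Real.cos (θ/2) = Real.sqrt (1 - x^2) := by
    rw [hθ2, Real.cos_arcsin]
  have hθ : θ = 2 * Real.arcsin x := rfl
  have hκ2 : (0:ℝ) < κ^2 := by positivity
  have hℓx : ℓ = 2 * x / κ := by rw [hxdef]; field_simp; try ring
  have hbound := segF_bound hx0 hx1
  have hexpr : (θ * r ^ 2 / 2 - r ^ 2 * Real.cos (θ / 2) * Real.sin (θ / 2)) - ℓ ^ 3 * κ / 12
      = (segF x - 0) / κ^2 := by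
    simp only [segF, hθ, hsin, hcos, r]
    rw [hℓx]
    field_simp
    rw [Real.cos_arcsin, Real.sin_arcsin (by linarith) hx1']
    ring
  rw [hexpr, abs_div, abs_of_pos hκ2, div_le_iff₀ hκ2]
  calc |segF x - 0| ≤ x^5 := hbound
    _ ≤ 1 * ℓ^5 * κ^3 * κ^2 := by
        rw [hℓx]
        have : (2*x/κ)^5 * κ^3 * κ^2 = 32 * x^5 := by field_simp; ring
        rw [one_mul, this]
        nlinarith [pow_nonneg hx0 5]
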